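/- Existence of the balancing transmission probability for Gaussian inputs on AWGN links: let σ1, σ2, P1, P2 > 0 and for τ² > 0 let f_{τ²}(y) = (2πτ²)^{−1/2}·exp(−y²/(2τ²)) denote the density of a zero-mean Gaussian with variance τ². Define φ(λ) := −∫_ℝ ( λ·f_{P2+σ2²}(y) + (1 − λ)·f_{σ2²}(y) ) · log2( λ·f_{P2+σ2²}(y) + (1 − λ)·f_{σ2²}(y) ) dy − (1/2)·log2(2πe·σ2²) and ψ(λ) := (1/2)·log2(1 + P1/σ1²)·(1 − λ) for λ ∈ [0,1]. Then φ is continuous on [0,1], φ(0) = 0, φ(1) = (1/2)·log2(1 + P2/σ2²), and there exists λ ∈ (0,1) with ψ(λ) = φ(λ). -/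

import Mathlib

open MeasureTheory

/-- Density at `y` of a zero-mean Gaussian with variance `v`:
`(2πv)^{−1/2}·exp(−y²/(2v))`. -/
noncomputable def gpdf (v y : ℝ) : ℝ :=
  (Real.sqrt (2 * Real.pi * v))⁻¹ * Real.exp (-(y ^ 2) / (2 * v))

lemma sq_exp_integrable {b : ℝ} (hb : 0 < b) :
    Integrable (fun x : ℝ => x ^ 2 * Real.exp (-b * x ^ 2)) := by
  have h := integrable_rpow_mul_exp_neg_mul_sq hb (s := 2) (by norm_num)
  refine h.congr (Filter.Eventually.of_forall fun x => ?_)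
  show x ^ (2:ℝ) * Real.exp (-b * x ^ 2) = x ^ (2:ℕ) * Real.exp (-b * x ^ 2)
  rw [show ((2:ℝ)) = ((2:ℕ):ℝ) by norm_num, Real.rpow_natCast]

lemma integral_sq_exp {b : ℝ} (hb : 0 < b) :
    ∫ x : ℝ, x ^ 2 * Real.exp (-b * x ^ 2) = Real.sqrt (Real.pi / b) / (2 * b) := by
  have hderiv : ∀ x : ℝ, HasDerivAt (fun x : ℝ => x * Real.exp (-b * x ^ 2))
      (Real.exp (-b * x ^ 2) - (2*b) * (x ^ 2 * Real.exp (-b * x ^ 2))) x := by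
    intro x
    have h1 : HasDerivAt (fun x : ℝ => -b * x ^ 2) (-b * (2 * x)) x := by
      simpa using (hasDerivAt_pow 2 x).const_mul (-b)
    have h2 : HasDerivAt (fun x : ℝ => x * Real.exp (-b * x ^ 2)) _ x := (hasDerivAt_id' x).mul h1.exp
    convert h2 using 1
    ring
  have hint_f : Integrable (fun x : ℝ => x * Real.exp (-b * x ^ 2)) :=
    integrable_mul_exp_neg_mul_sq hb
  have hint1 := integrable_exp_neg_mul_sq hb
  have hint2 := (sq_exp_integrable hb).const_mul (2*b)
  have h0 : ∫ x : ℝ, (Real.exp (-b * x ^ 2) - (2*b) * (x ^ 2 * Real.exp (-b * x ^ 2))) = 0 :=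
    integral_eq_zero_of_hasDerivAt_of_integrable hderiv (hint1.sub hint2) hint_f
  rw [integral_sub hint1 hint2, integral_const_mul, integral_gaussian] at h0
  have hb' : (2*b) ≠ 0 := by positivity
  rw [eq_div_iff hb']
  linarith

lemma gpdf_eq (v y : ℝ) :
    gpdf v y = (Real.sqrt (2 * Real.pi * v))⁻¹ * Real.exp (-(1/(2*v)) * y ^ 2) := by
  simp only [gpdf]
  rw [show -(y ^ 2) / (2 * v) = -(1/(2*v)) * y ^ 2 by ring]

lemma gpdf_pos {v : ℝ} (hv : 0 < v) (y : ℝ) : 0 < gpdf v y :=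
  mul_pos (inv_pos.2 (Real.sqrt_pos.2 (by positivity))) (Real.exp_pos _)

lemma gpdf_continuous (v : ℝ) : Continuous (gpdf v) := by
  unfold gpdf
  fun_prop

lemma sqrt_pi_div (v : ℝ) (hv : 0 < v) :
    Real.sqrt (Real.pi / (1/(2*v))) = Real.sqrt (2 * Real.pi * v) := by
  rw [show Real.pi / (1/(2*v)) = 2 * Real.pi * v by field_simp]

lemma integrable_gpdf {v : ℝ} (hv : 0 < v) : Integrable (gpdf v) := by
  have hb : (0:ℝ) < 1/(2*v) := by positivity
  have h := (integrable_exp_neg_mul_sq hb).const_mul (Real.sqrt (2 * Real.pi * v))⁻¹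
  exact h.congr (Filter.Eventually.of_forall fun y => (gpdf_eq v y).symm)

lemma integrable_sq_gpdf {v : ℝ} (hv : 0 < v) : Integrable (fun y : ℝ => y ^ 2 * gpdf v y) := by
  have hb : (0:ℝ) < 1/(2*v) := by positivity
  have h := (sq_exp_integrable hb).const_mul (Real.sqrt (2 * Real.pi * v))⁻¹
  refine h.congr (Filter.Eventually.of_forall fun y => ?_)
  show (Real.sqrt (2 * Real.pi * v))⁻¹ * (y ^ 2 * Real.exp (-(1/(2*v)) * y ^ 2)) = y ^ 2 * gpdf v y
  rw [gpdf_eq]; ring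

lemma integral_gpdf {v : ℝ} (hv : 0 < v) : ∫ y : ℝ, gpdf v y = 1 := by
  have hb : (0:ℝ) < 1/(2*v) := by positivity
  rw [show (fun y : ℝ => gpdf v y)
      = fun y : ℝ => (Real.sqrt (2 * Real.pi * v))⁻¹ * Real.exp (-(1/(2*v)) * y ^ 2) from
      funext fun y => gpdf_eq v y]
  rw [integral_const_mul, integral_gaussian, sqrt_pi_div v hv]
  exact inv_mul_cancel₀ (Real.sqrt_pos.2 (by positivity)).ne'

lemma integral_sq_gpdf {v : ℝ} (hv : 0 < v) : ∫ y : ℝ, y ^ 2 * gpdf v y = v := by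
  have hb : (0:ℝ) < 1/(2*v) := by positivity
  rw [show (fun y : ℝ => y ^ 2 * gpdf v y)
      = fun y : ℝ => (Real.sqrt (2 * Real.pi * v))⁻¹ * (y ^ 2 * Real.exp (-(1/(2*v)) * y ^ 2)) from
      funext fun y => by rw [gpdf_eq]; ring]
  rw [integral_const_mul, integral_sq_exp hb, sqrt_pi_div v hv]
  have hs : (0:ℝ) < Real.sqrt (2 * Real.pi * v) := Real.sqrt_pos.2 (by positivity)
  field_simp

lemma log_gpdf {v : ℝ} (hv : 0 < v) (y : ℝ) :
    Real.log (gpdf v y) = Real.log ((Real.sqrt (2 * Real.pi * v))⁻¹) - y ^ 2 / (2 * v) := by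
  have hs : (0:ℝ) < Real.sqrt (2 * Real.pi * v) := Real.sqrt_pos.2 (by positivity)
  simp only [gpdf]
  rw [Real.log_mul (inv_ne_zero hs.ne') (Real.exp_ne_zero _), Real.log_exp]
  ring

lemma entropy_gpdf {v : ℝ} (hv : 0 < v) :
    ∫ y : ℝ, gpdf v y * Real.logb 2 (gpdf v y)
      = -(1/2) * Real.logb 2 (2 * Real.pi * Real.exp 1 * v) := by
  have hs : (0:ℝ) < Real.sqrt (2 * Real.pi * v) := Real.sqrt_pos.2 (by positivity)
  have hl2 : Real.log 2 ≠ 0 := (Real.log_pos (by norm_num)).ne'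
  set c := Real.log ((Real.sqrt (2 * Real.pi * v))⁻¹) with hcdef
  have hpt : ∀ y : ℝ, gpdf v y * Real.logb 2 (gpdf v y)
      = (c / Real.log 2) * gpdf v y - (1/(2*v*Real.log 2)) * (y ^ 2 * gpdf v y) := by
    intro y
    rw [Real.logb, log_gpdf hv, ← hcdef]
    field_simp
  simp only [hpt]
  rw [integral_sub ((integrable_gpdf hv).const_mul _) ((integrable_sq_gpdf hv).const_mul _),
    integral_const_mul, integral_const_mul, integral_gpdf hv, integral_sq_gpdf hv]
  have hc : c = -(Real.log (2 * Real.pi * v)) / 2 := by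
    rw [hcdef, Real.log_inv, Real.log_sqrt (by positivity)]; ring
  have hE : Real.log (2 * Real.pi * Real.exp 1 * v) = Real.log (2 * Real.pi * v) + 1 := by
    rw [show 2 * Real.pi * Real.exp 1 * v = (2 * Real.pi * v) * Real.exp 1 by ring,
      Real.log_mul (by positivity) (Real.exp_ne_zero 1), Real.log_exp]
  rw [Real.logb, hE, hc]
  field_simp
  ring

lemma min_le_mix {a b l : ℝ} (h0 : 0 ≤ l) (h1 : l ≤ 1) : min a b ≤ l * a + (1 - l) * b := by
  nlinarith [mul_nonneg h0 (sub_nonneg.2 (min_le_left a b)),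
    mul_nonneg (sub_nonneg.2 h1) (sub_nonneg.2 (min_le_right a b))]

lemma mix_le_max {a b l : ℝ} (h0 : 0 ≤ l) (h1 : l ≤ 1) : l * a + (1 - l) * b ≤ max a b := by
  nlinarith [mul_nonneg h0 (sub_nonneg.2 (le_max_left a b)),
    mul_nonneg (sub_nonneg.2 h1) (sub_nonneg.2 (le_max_right a b))]

lemma abs_log_mix {a b g : ℝ} (ha : 0 < a) (hb : 0 < b) (hmin : min a b ≤ g)
    (hmax : g ≤ max a b) : |Real.log g| ≤ |Real.log a| + |Real.log b| := by
  have hg : 0 < g := lt_of_lt_of_le (lt_min ha hb) hmin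
  have l1 : min (Real.log a) (Real.log b) ≤ Real.log g := by
    rcases le_total a b with h | h
    · exact le_trans (min_le_left _ _) (Real.log_le_log ha (by rwa [min_eq_left h] at hmin))
    · exact le_trans (min_le_right _ _) (Real.log_le_log hb (by rwa [min_eq_right h] at hmin))
  have l2 : Real.log g ≤ max (Real.log a) (Real.log b) := by
    rcases le_total a b with h | h
    · exact le_trans (Real.log_le_log hg (by rwa [max_eq_right h] at hmax)) (le_max_right _ _)
    · exact le_trans (Real.log_le_log hg (by rwa [max_eq_left h] at hmax)) (le_max_left _ _)
  have hna := neg_abs_le (Real.log a)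
  have hnb := neg_abs_le (Real.log b)
  have hpa := le_abs_self (Real.log a)
  have hpb := le_abs_self (Real.log b)
  have h0a := abs_nonneg (Real.log a)
  have h0b := abs_nonneg (Real.log b)
  rw [abs_le]
  constructor
  · have : -(|Real.log a| + |Real.log b|) ≤ min (Real.log a) (Real.log b) :=
      le_min (by linarith) (by linarith)
    linarith
  · have : max (Real.log a) (Real.log b) ≤ |Real.log a| + |Real.log b| :=
      max_le (by linarith) (by linarith)
    linarith

lemma contI {v0 v1 : ℝ} (h0 : 0 < v0) (h1 : 0 < v1) :
    ContinuousOn (fun l : ℝ => ∫ y : ℝ,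
      (l * gpdf v1 y + (1 - l) * gpdf v0 y) * Real.logb 2 (l * gpdf v1 y + (1 - l) * gpdf v0 y))
      (Set.Icc (0:ℝ) 1) := by
  set K := |Real.log ((Real.sqrt (2 * Real.pi * v1))⁻¹)| +
      |Real.log ((Real.sqrt (2 * Real.pi * v0))⁻¹)| with hK
  set D := 1/(2*v1) + 1/(2*v0) with hD
  apply continuousOn_of_dominated (bound := fun y : ℝ => (Real.log 2)⁻¹ *
      (K * (gpdf v1 y + gpdf v0 y) + D * (y ^ 2 * gpdf v1 y + y ^ 2 * gpdf v0 y)))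
  · intro l hl
    have hg : Continuous fun y : ℝ => l * gpdf v1 y + (1 - l) * gpdf v0 y :=
      (continuous_const.mul (gpdf_continuous v1)).add (continuous_const.mul (gpdf_continuous v0))
    have hpos : ∀ y : ℝ, 0 < l * gpdf v1 y + (1 - l) * gpdf v0 y := fun y =>
      lt_of_lt_of_le (lt_min (gpdf_pos h1 y) (gpdf_pos h0 y)) (min_le_mix hl.1 hl.2)
    have hlog : Continuous fun y : ℝ => Real.log (l * gpdf v1 y + (1 - l) * gpdf v0 y) :=
      hg.log fun y => (hpos y).ne'
    simp only [Real.logb]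
    exact (hg.mul (hlog.div_const _)).aestronglyMeasurable
  · intro l hl
    refine Filter.Eventually.of_forall fun y => ?_
    have ha : 0 < gpdf v1 y := gpdf_pos h1 y
    have hb : 0 < gpdf v0 y := gpdf_pos h0 y
    have hg : 0 < l * gpdf v1 y + (1 - l) * gpdf v0 y :=
      lt_of_lt_of_le (lt_min ha hb) (min_le_mix hl.1 hl.2)
    have hlog2 : 0 < Real.log 2 := Real.log_pos (by norm_num)
    have hA : l * gpdf v1 y + (1 - l) * gpdf v0 y ≤ gpdf v1 y + gpdf v0 y := by
      nlinarith [mul_nonneg (sub_nonneg.2 hl.2) ha.le, mul_nonneg hl.1 hb.le]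
    have hBa : |Real.log (gpdf v1 y)| ≤
        |Real.log ((Real.sqrt (2 * Real.pi * v1))⁻¹)| + y ^ 2 / (2 * v1) := by
      rw [log_gpdf h1]
      refine le_trans (abs_sub _ _) ?_
      rw [abs_of_nonneg (by positivity : (0:ℝ) ≤ y ^ 2 / (2 * v1))]
    have hBb : |Real.log (gpdf v0 y)| ≤
        |Real.log ((Real.sqrt (2 * Real.pi * v0))⁻¹)| + y ^ 2 / (2 * v0) := by
      rw [log_gpdf h0]
      refine le_trans (abs_sub _ _) ?_
      rw [abs_of_nonneg (by positivity : (0:ℝ) ≤ y ^ 2 / (2 * v0))]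
    have hB : |Real.log (l * gpdf v1 y + (1 - l) * gpdf v0 y)| ≤ K + D * y ^ 2 := by
      refine le_trans (abs_log_mix ha hb (min_le_mix hl.1 hl.2) (mix_le_max hl.1 hl.2)) ?_
      rw [hK, hD]
      have e1 : y ^ 2 / (2 * v1) = (1/(2*v1)) * y ^ 2 := by ring
      have e2 : y ^ 2 / (2 * v0) = (1/(2*v0)) * y ^ 2 := by ring
      rw [e1] at hBa; rw [e2] at hBb
      linarith
    show ‖(l * gpdf v1 y + (1 - l) * gpdf v0 y) *
        Real.logb 2 (l * gpdf v1 y + (1 - l) * gpdf v0 y)‖ ≤ _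
    rw [Real.norm_eq_abs, Real.logb, abs_mul, abs_div, abs_of_pos hg, abs_of_pos hlog2]
    have key : (l * gpdf v1 y + (1 - l) * gpdf v0 y) *
        (|Real.log (l * gpdf v1 y + (1 - l) * gpdf v0 y)| / Real.log 2)
        ≤ (gpdf v1 y + gpdf v0 y) * ((K + D * y ^ 2) / Real.log 2) := by
      gcongr
    refine le_trans key (le_of_eq ?_)
    ring
  · apply Integrable.const_mul
    exact (((integrable_gpdf h1).add (integrable_gpdf h0)).const_mul K).add
      (((integrable_sq_gpdf h1).add (integrable_sq_gpdf h0)).const_mul D)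
  · refine Filter.Eventually.of_forall fun y => ?_
    have ha : 0 < gpdf v1 y := gpdf_pos h1 y
    have hb : 0 < gpdf v0 y := gpdf_pos h0 y
    have hGc : Continuous fun l : ℝ => l * gpdf v1 y + (1 - l) * gpdf v0 y := by
      fun_prop
    simp only [Real.logb]
    refine hGc.continuousOn.mul ((ContinuousOn.log hGc.continuousOn fun l hl => ?_).div_const _)
    exact (lt_of_lt_of_le (lt_min ha hb) (min_le_mix hl.1 hl.2)).ne'


/-- existence of the balancing transmission probability for Gaussian
inputs on AWGN links: with
`φ(λ) = −∫ (λ·f_{P2+σ2²} + (1−λ)·f_{σ2²})·log2(λ·f_{P2+σ2²} + (1−λ)·f_{σ2²})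
        − (1/2)·log2(2πe·σ2²)`
and `ψ(λ) = (1/2)·log2(1 + P1/σ1²)·(1 − λ)`, the function `φ` is continuous on `[0,1]`,
`φ(0) = 0`, `φ(1) = (1/2)·log2(1 + P2/σ2²)`, and there exists `λ ∈ (0,1)` with
`ψ(λ) = φ(λ)`. -/
theorem gaussian_balancing_probability_exists
    (σ1sq σ2sq P1 P2 : ℝ) (hσ1 : 0 < σ1sq) (hσ2 : 0 < σ2sq)
    (hP1 : 0 < P1) (hP2 : 0 < P2)
    (φ ψ : ℝ → ℝ)
    (hφ : ∀ l : ℝ, φ l =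
      -(∫ y : ℝ, (l * gpdf (P2 + σ2sq) y + (1 - l) * gpdf σ2sq y) *
          Real.logb 2 (l * gpdf (P2 + σ2sq) y + (1 - l) * gpdf σ2sq y))
        - (1/2) * Real.logb 2 (2 * Real.pi * Real.exp 1 * σ2sq))
    (hψ : ∀ l : ℝ, ψ l = (1/2) * Real.logb 2 (1 + P1 / σ1sq) * (1 - l)) :
    ContinuousOn φ (Set.Icc (0:ℝ) 1) ∧
    φ 0 = 0 ∧
    φ 1 = (1/2) * Real.logb 2 (1 + P2 / σ2sq) ∧
    ∃ l ∈ Set.Ioo (0:ℝ) 1, ψ l = φ l := by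
  have hv1 : 0 < P2 + σ2sq := by linarith
  -- continuity of φ
  have hφfun : φ = fun l : ℝ =>
      -(∫ y : ℝ, (l * gpdf (P2 + σ2sq) y + (1 - l) * gpdf σ2sq y) *
          Real.logb 2 (l * gpdf (P2 + σ2sq) y + (1 - l) * gpdf σ2sq y))
        - (1/2) * Real.logb 2 (2 * Real.pi * Real.exp 1 * σ2sq) := funext hφ
  have hφcont : ContinuousOn φ (Set.Icc (0:ℝ) 1) := by
    rw [hφfun]
    exact ((contI hσ2 hv1).neg).sub continuousOn_const
  -- φ 0
  have hφ0 : φ 0 = 0 := by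
    rw [hφ 0]
    simp only [zero_mul, zero_add, sub_zero, one_mul]
    rw [entropy_gpdf hσ2]
    ring
  -- φ 1
  have hφ1 : φ 1 = (1/2) * Real.logb 2 (1 + P2 / σ2sq) := by
    rw [hφ 1]
    simp only [one_mul, sub_self, zero_mul, add_zero]
    rw [entropy_gpdf hv1]
    have h1 : (2 * Real.pi * Real.exp 1 * (P2 + σ2sq)) ≠ 0 := by positivity
    have h0 : (2 * Real.pi * Real.exp 1 * σ2sq) ≠ 0 := by positivity
    rw [show (1 + P2 / σ2sq)
        = (2 * Real.pi * Real.exp 1 * (P2 + σ2sq)) / (2 * Real.pi * Real.exp 1 * σ2sq) by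
      field_simp; ring]
    rw [Real.logb_div h1 h0]
    ring
  refine ⟨hφcont, hφ0, hφ1, ?_⟩
  -- IVT
  have hψcont : Continuous ψ := by
    rw [funext hψ]
    fun_prop
  have hgcont : ContinuousOn (fun l => ψ l - φ l) (Set.Icc (0:ℝ) 1) :=
    (hψcont.continuousOn).sub hφcont
  have hlogb1 : 0 < Real.logb 2 (1 + P1 / σ1sq) :=
    Real.logb_pos (by norm_num) (by nlinarith [div_pos hP1 hσ1])
  have hlogb2 : 0 < Real.logb 2 (1 + P2 / σ2sq) :=
    Real.logb_pos (by norm_num) (by nlinarith [div_pos hP2 hσ2])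
  have hg0 : 0 < ψ 0 - φ 0 := by rw [hψ 0, hφ0]; linarith
  have hg1 : ψ 1 - φ 1 < 0 := by rw [hψ 1, hφ1]; norm_num; linarith
  have := intermediate_value_Ioo' (by norm_num : (0:ℝ) ≤ 1) hgcont
    (Set.mem_Ioo.2 ⟨hg1, hg0⟩ : (0:ℝ) ∈ Set.Ioo (ψ 1 - φ 1) (ψ 0 - φ 0))
  obtain ⟨l, hl, hgl⟩ := this
  exact ⟨l, hl, sub_eq_zero.mp hgl⟩
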